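/- arXiv:1009.5756 — 3 statements merged into one kernel-verified Lean document; each statement's English description precedes it below -/
import Mathlib

section
/- Let κ > 0, C₁ > 0, C₂ > 0 and 1 < α < 2 be real numbers. Then there exist constants C₃ ≥ 0 and C₄ ≥ 0, depending only on κ, α, C₁ and C₂, with the following property: for all real numbers t > 0, a ≥ 0 and b such that κ·t·(a − b)² − (a − α·b) ≤ C₁·t·a + C₂·t, one has a − α·b ≤ C₃ + C₄/t. -/
set_option maxHeartbeats 1600000 in
/-- Real-variable core of the Li–Yau gradient estimate: there are constants `C₃, C₄ ≥ 0`
depending only on `κ, α, C₁, C₂` such that whenever `t > 0`, `a ≥ 0` and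
`κ t (a − b)² − (a − α b) ≤ C₁ t a + C₂ t`, one has `a − α b ≤ C₃ + C₄ / t`. -/
theorem stmt_8 (κ C₁ C₂ α : ℝ) (hκ : 0 < κ) (hC₁ : 0 < C₁) (hC₂ : 0 < C₂)
    (hα₁ : 1 < α) (hα₂ : α < 2) :
    ∃ C₃ C₄ : ℝ, 0 ≤ C₃ ∧ 0 ≤ C₄ ∧
      ∀ t a b : ℝ, 0 < t → 0 ≤ a →
        κ * t * (a - b) ^ 2 - (a - α * b) ≤ C₁ * t * a + C₂ * t →
        a - α * b ≤ C₃ + C₄ / t := by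
  have hα0 : (0:ℝ) < α := lt_trans one_pos hα₁
  have hα1 : (0:ℝ) < α - 1 := sub_pos.mpr hα₁
  set S : ℝ := Real.sqrt (α^2*C₂/κ + C₁^2*α^4/(4*κ^2*(α-1)^2)) with hSdef
  have hSnn : 0 ≤ S := Real.sqrt_nonneg _
  have hS2 : S^2 = α^2*C₂/κ + C₁^2*α^4/(4*κ^2*(α-1)^2) :=
    Real.sq_sqrt (by positivity)
  have hS2' : 4*κ^2*(α-1)^2*S^2 = 4*κ*(α-1)^2*α^2*C₂ + C₁^2*α^4 := by
    rw [hS2]; field_simp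
  refine ⟨S, α^2/κ, hSnn, by positivity, ?_⟩
  intro t a b ht ha h
  by_contra hcon
  push_neg at hcon
  have hFpos : 0 < a - α*b := lt_of_le_of_lt (by positivity) hcon
  -- multiplied-out key inequality
  have key2 : 4*κ*(α-1)^2 * (κ*t*(a - α*b)^2) ≤
      4*κ*(α-1)^2*α^2*(a - α*b) + 4*κ*(α-1)^2*α^2*C₂*t + C₁^2*α^4*t := by
    have h' : (4*κ*(α-1)^2*α^2) * (κ * t * (a - b) ^ 2 - (a - α * b)) ≤
        (4*κ*(α-1)^2*α^2) * (C₁ * t * a + C₂ * t) :=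
      mul_le_mul_of_nonneg_left h (by positivity)
    nlinarith [mul_nonneg ht.le (sq_nonneg (2*κ*(α-1)^2*a - C₁*α^2)),
      mul_nonneg (mul_nonneg (mul_nonneg ht.le ha) hFpos.le)
        (mul_nonneg (mul_nonneg (by positivity : (0:ℝ) ≤ 8*κ^2) hα1.le)
          (mul_nonneg hα1.le hα1.le))]
  -- from hcon: κ t F > κ t S + α²
  have hcon' : κ*t*S + α^2 < κ*t*(a - α*b) := by
    have h1 : κ*t*(S + (α^2/κ)/t) < κ*t*(a - α*b) :=
      (mul_lt_mul_iff_right₀ (by positivity)).mpr hcon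
    have h2 : κ*t*(S + (α^2/κ)/t) = κ*t*S + α^2 := by
      field_simp
    rw [h2] at h1; exact h1
  have hFS : S ≤ a - α*b := by
    have : (0:ℝ) < (α^2/κ)/t := by positivity
    linarith
  have step : κ*t*S^2 + α^2*(a - α*b) < κ*t*(a - α*b)^2 := by
    nlinarith [mul_pos (sub_pos.mpr hcon') hFpos,
      mul_nonneg (mul_nonneg (mul_nonneg hκ.le ht.le) (sub_nonneg.mpr hFS)) hSnn]
  have step2 : 4*κ*(α-1)^2*(κ*t*S^2 + α^2*(a - α*b)) < 4*κ*(α-1)^2*(κ*t*(a - α*b)^2) :=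
    mul_lt_mul_of_pos_left step (by positivity)
  have hS2t : t*(4*κ^2*(α-1)^2*S^2) = t*(4*κ*(α-1)^2*α^2*C₂ + C₁^2*α^4) := by
    rw [hS2']
  nlinarith [key2, step2, hS2t]
end

section
/- Let d ≥ 1, let u : ℝ^d × (0,∞) → ℝ be a positive function such that f(x,t) = log u(x,t) is differentiable in (x,t), and let α > 0, C₁ ≥ 0, C₂ ≥ 0 be constants such that for all x ∈ ℝ^d and t > 0 one has ‖∇_x f(x,t)‖² − α·∂_t f(x,t) ≤ C₁ + C₂/t. Then for all x, y ∈ ℝ^d and all 0 < t₁ < t₂: log u(x,t₁) − log u(y,t₂) ≤ α‖x−y‖²/(4(t₂−t₁)) + (C₁/α)(t₂−t₁) + (C₂/α)·log(t₂/t₁). -/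
open RealInnerProductSpace

set_option maxHeartbeats 1000000

/-- Euclidean form of the Li–Yau path-integration argument: if `u > 0`,
`f = log u` is differentiable in `(x,t)` for `t > 0`, and
`‖∇ₓf‖² − α ∂ₜf ≤ C₁ + C₂/t`, then for `0 < t₁ < t₂`,
`log u(x,t₁) − log u(y,t₂) ≤ α‖x−y‖²/(4(t₂−t₁)) + (C₁/α)(t₂−t₁) + (C₂/α) log(t₂/t₁)`. -/
theorem stmt_9 (d : ℕ) (hd : 1 ≤ d) (u : EuclideanSpace ℝ (Fin d) → ℝ → ℝ)
    (hu : ∀ x t, 0 < t → 0 < u x t)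
    (hdiff : ∀ x t, 0 < t →
      DifferentiableAt ℝ
        (fun p : EuclideanSpace ℝ (Fin d) × ℝ => Real.log (u p.1 p.2)) (x, t))
    (α C₁ C₂ : ℝ) (hα : 0 < α) (hC₁ : 0 ≤ C₁) (hC₂ : 0 ≤ C₂)
    (hLiYau : ∀ x t, 0 < t →
      ‖gradient (fun y => Real.log (u y t)) x‖ ^ 2
          - α * deriv (fun s => Real.log (u x s)) t ≤ C₁ + C₂ / t) :
    ∀ x y : EuclideanSpace ℝ (Fin d), ∀ t₁ t₂ : ℝ, 0 < t₁ → t₁ < t₂ →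
      Real.log (u x t₁) - Real.log (u y t₂) ≤
        α * ‖x - y‖ ^ 2 / (4 * (t₂ - t₁)) + (C₁ / α) * (t₂ - t₁)
          + (C₂ / α) * Real.log (t₂ / t₁) := by
  intro x y t₁ t₂ ht₁ ht
  set F : EuclideanSpace ℝ (Fin d) × ℝ → ℝ := fun p => Real.log (u p.1 p.2) with hF
  set v : EuclideanSpace ℝ (Fin d) := x - y with hv
  set Δ : ℝ := t₂ - t₁ with hΔ
  have hΔpos : 0 < Δ := sub_pos.mpr ht
  set γ : ℝ → EuclideanSpace ℝ (Fin d) := fun s => y + s • v with hγ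
  set τ : ℝ → ℝ := fun s => t₂ - s * Δ with hτ
  set K : ℝ := α * ‖v‖ ^ 2 / (4 * Δ) + (C₁ / α) * Δ with hK
  set H : ℝ → ℝ := fun s => K * s - (C₂ / α) * Real.log (τ s) with hH
  set g : ℝ → ℝ := fun s => Real.log (u (γ s) (τ s)) with hg
  -- positivity of τ on [0,1]
  have hτpos : ∀ s : ℝ, s ≤ 1 → 0 < τ s := by
    intro s hs
    have : s * Δ ≤ 1 * Δ := mul_le_mul_of_nonneg_right hs hΔpos.le
    simp only [hτ]
    nlinarith
  -- derivative of the path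
  have hpath : ∀ s : ℝ, HasDerivAt (fun s => ((γ s, τ s) : EuclideanSpace ℝ (Fin d) × ℝ)) (v, -Δ) s := by
    intro s
    have h1 : HasDerivAt γ v s := by
      have := ((hasDerivAt_id s).smul_const v).const_add y
      simpa [hγ] using this
    have h2 : HasDerivAt τ (-Δ) s := by
      have := ((hasDerivAt_id s).mul_const Δ).const_sub t₂
      simpa using this
    exact HasDerivAt.prodMk h1 h2
  -- key derivative bound for g
  have hgder : ∀ s : ℝ, s ≤ 1 → ∃ g', HasDerivAt g g' s ∧
      g' ≤ K + (C₂ / α) * (Δ / τ s) := by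
    intro s hs
    have hτs := hτpos s hs
    have hFd : DifferentiableAt ℝ F (γ s, τ s) := hdiff (γ s) (τ s) hτs
    set L := fderiv ℝ F (γ s, τ s) with hL
    refine ⟨L (v, -Δ), by have := hFd.hasFDerivAt.comp_hasDerivAt s (hpath s); exact this, ?_⟩
    -- partial derivative in x
    have hpartx : HasFDerivAt (fun z : EuclideanSpace ℝ (Fin d) => F (z, τ s))
        (L.comp ((ContinuousLinearMap.id ℝ (EuclideanSpace ℝ (Fin d))).prod 0)) (γ s) := by
      exact hFd.hasFDerivAt.comp (f := fun x => (id x, τ s)) (γ s)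
        (HasFDerivAt.prodMk (hasFDerivAt_id (γ s)) (hasFDerivAt_const (τ s) (γ s)))
    have hgradeq : ∀ w : EuclideanSpace ℝ (Fin d), ⟪gradient (fun z : EuclideanSpace ℝ (Fin d) => Real.log (u z (τ s))) (γ s), w⟫ = L (w, 0) := by
      intro w
      have hfd : fderiv ℝ (fun z : EuclideanSpace ℝ (Fin d) => Real.log (u z (τ s))) (γ s)
          = L.comp ((ContinuousLinearMap.id ℝ (EuclideanSpace ℝ (Fin d))).prod 0) := hpartx.fderiv
      rw [gradient, InnerProductSpace.toDual_symm_apply, hfd]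
      simp
    -- partial derivative in t
    have hpartt : HasDerivAt (fun r : ℝ => Real.log (u (γ s) r)) (L (0, 1)) (τ s) := by
      have := hFd.hasFDerivAt.comp_hasDerivAt (τ s)
        (HasDerivAt.prodMk (hasDerivAt_const (τ s) (γ s)) (hasDerivAt_id (τ s)))
      exact this
    have hderivt : deriv (fun r : ℝ => Real.log (u (γ s) r)) (τ s) = L (0, 1) := hpartt.deriv
    -- Li-Yau at the point
    have hLY := hLiYau (γ s) (τ s) hτs
    rw [hderivt] at hLY
    set G := gradient (fun z : EuclideanSpace ℝ (Fin d) => Real.log (u z (τ s))) (γ s) with hG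
    -- decompose L (v, -Δ)
    have hdecomp : L (v, -Δ) = ⟪G, v⟫ - Δ * L (0, 1) := by
      have : (v, -Δ) = ((v, 0) : EuclideanSpace ℝ (Fin d) × ℝ) + (-Δ) • ((0, 1) : EuclideanSpace ℝ (Fin d) × ℝ) := by
        simp [Prod.ext_iff]
      rw [this, map_add, map_smul, hgradeq v]
      ring_nf
    rw [hdecomp]
    -- Cauchy-Schwarz + AM-GM
    have hCS : ⟪G, v⟫ ≤ ‖G‖ * ‖v‖ := real_inner_le_norm G v
    have hLt : (‖G‖ ^ 2 - C₁ - C₂ / τ s) / α ≤ L (0, 1) := by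
      rw [div_le_iff₀ hα]
      linarith
    have hamgm : ‖G‖ * ‖v‖ - (Δ / α) * ‖G‖ ^ 2 ≤ α * ‖v‖ ^ 2 / (4 * Δ) := by
      have key : (4 * Δ * α) * (‖G‖ * ‖v‖ - (Δ / α) * ‖G‖ ^ 2)
          ≤ (4 * Δ * α) * (α * ‖v‖ ^ 2 / (4 * Δ)) := by
        have e1 : (4 * Δ * α) * (‖G‖ * ‖v‖ - (Δ / α) * ‖G‖ ^ 2)
            = 4 * Δ * α * ‖G‖ * ‖v‖ - 4 * Δ ^ 2 * ‖G‖ ^ 2 := by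
          field_simp
        have e2 : (4 * Δ * α) * (α * ‖v‖ ^ 2 / (4 * Δ)) = α ^ 2 * ‖v‖ ^ 2 := by
          field_simp
        rw [e1, e2]
        nlinarith [sq_nonneg (2 * Δ * ‖G‖ - α * ‖v‖)]
      exact le_of_mul_le_mul_left key (by positivity)
    have h1 : Δ * L (0, 1) ≥ Δ * ((‖G‖ ^ 2 - C₁ - C₂ / τ s) / α) :=
      mul_le_mul_of_nonneg_left hLt hΔpos.le
    have hτne : τ s ≠ 0 := hτs.ne'
    have : ⟪G, v⟫ - Δ * L (0, 1) ≤ ‖G‖ * ‖v‖ - (Δ / α) * ‖G‖ ^ 2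
        + (C₁ / α) * Δ + (C₂ / α) * (Δ / τ s) := by
      have heq : Δ * ((‖G‖ ^ 2 - C₁ - C₂ / τ s) / α)
          = (Δ / α) * ‖G‖ ^ 2 - (C₁ / α) * Δ - (C₂ / α) * (Δ / τ s) := by
        field_simp
      linarith [h1, hCS]
    calc ⟪G, v⟫ - Δ * L (0, 1)
        ≤ ‖G‖ * ‖v‖ - (Δ / α) * ‖G‖ ^ 2 + (C₁ / α) * Δ + (C₂ / α) * (Δ / τ s) := this
      _ ≤ α * ‖v‖ ^ 2 / (4 * Δ) + (C₁ / α) * Δ + (C₂ / α) * (Δ / τ s) := by linarith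
      _ = K + (C₂ / α) * (Δ / τ s) := by rw [hK]
  -- derivative of H
  have hHder : ∀ s : ℝ, s ≤ 1 → HasDerivAt H (K + (C₂ / α) * (Δ / τ s)) s := by
    intro s hs
    have hτs := hτpos s hs
    have h1 : HasDerivAt (fun s : ℝ => K * s) K s := by
      simpa using (hasDerivAt_id s).const_mul K
    have hτd : HasDerivAt τ (-Δ) s := by
      have := ((hasDerivAt_id s).mul_const Δ).const_sub t₂
      simpa using this
    have h2 : HasDerivAt (fun s => Real.log (τ s)) ((τ s)⁻¹ * (-Δ)) s :=
      (Real.hasDerivAt_log hτs.ne').comp s hτd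
    have h3 := h1.sub (h2.const_mul (C₂ / α))
    exact h3.congr_deriv (by ring)
  -- ψ := H - g is monotone on [0,1]
  set ψ : ℝ → ℝ := fun s => H s - g s with hψ
  have hmono : MonotoneOn ψ (Set.Icc (0:ℝ) 1) := by
    apply monotoneOn_of_deriv_nonneg (convex_Icc 0 1)
    · intro s hs
      obtain ⟨g', hg', _⟩ := hgder s hs.2
      exact ((hHder s hs.2).sub hg').continuousAt.continuousWithinAt
    · intro s hs
      rw [interior_Icc] at hs
      obtain ⟨g', hg', _⟩ := hgder s hs.2.le
      exact ((hHder s hs.2.le).sub hg').differentiableAt.differentiableWithinAt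
    · intro s hs
      rw [interior_Icc] at hs
      obtain ⟨g', hg', hbound⟩ := hgder s hs.2.le
      rw [show ψ = H - g from rfl, ((hHder s hs.2.le).sub hg').deriv]
      linarith
  have hkey : ψ 0 ≤ ψ 1 := hmono (by norm_num) (by norm_num) zero_le_one
  -- unfold
  have hγ0 : γ 0 = y := by simp [hγ]
  have hγ1 : γ 1 = x := by simp [hγ, hv]
  have hτ0 : τ 0 = t₂ := by simp [hτ]
  have hτ1 : τ 1 = t₁ := by simp [hτ, hΔ]
  have hlog : Real.log (t₂ / t₁) = Real.log t₂ - Real.log t₁ :=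
    Real.log_div (ht₁.trans ht).ne' ht₁.ne'
  simp only [hψ, hH, hg, hγ0, hγ1, hτ0, hτ1] at hkey
  rw [hlog]
  rw [hK]
  linarith
end

section
/- Let d ≥ 1, let u : ℝ^d × (0,∞) → ℝ be a positive function which is ℤ^d-periodic in the space variable (i.e. u(x + m, t) = u(x,t) for every m ∈ ℤ^d, x ∈ ℝ^d, t > 0), such that f(x,t) = log u(x,t) is differentiable in (x,t), and let α > 0, C₁ ≥ 0, C₂ ≥ 0 be constants such that for all x ∈ ℝ^d and t > 0 one has ‖∇_x f(x,t)‖² − α·∂_t f(x,t) ≤ C₁ + C₂/t. Then for all x, y ∈ ℝ^d and all 0 < t₁ < t₂: u(x,t₁) ≤ u(y,t₂) · (t₂/t₁)^{C₂/α} · exp( α·d/(4(t₂−t₁)) + (C₁/α)(t₂−t₁) ). -/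
open InnerProductSpace RealInnerProductSpace

private lemma aux_amgm (a b c : ℝ) (hc : 0 < c) : a * b ≤ c * a ^ 2 + b ^ 2 / (4 * c) := by
  have h : a * b - c * a ^ 2 ≤ b ^ 2 / (4 * c) := by
    rw [le_div_iff₀ (by positivity)]
    nlinarith [sq_nonneg (2 * c * a - b)]
  linarith


/-- Periodic (compact) form of the Harnack inequality: if `u > 0` is `ℤ^d`-periodic in
space, `f = log u` is differentiable in `(x,t)` for `t > 0`, and
`‖∇ₓf‖² − α ∂ₜf ≤ C₁ + C₂/t`, then for `0 < t₁ < t₂`,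
`u(x,t₁) ≤ u(y,t₂) (t₂/t₁)^{C₂/α} exp(αd/(4(t₂−t₁)) + (C₁/α)(t₂−t₁))`. -/
theorem stmt_10 (d : ℕ) (hd : 1 ≤ d) (u : EuclideanSpace ℝ (Fin d) → ℝ → ℝ)
    (hu : ∀ x t, 0 < t → 0 < u x t)
    (hper : ∀ (m : Fin d → ℤ) (x : EuclideanSpace ℝ (Fin d)) (t : ℝ), 0 < t →
      u (x + (EuclideanSpace.equiv (Fin d) ℝ).symm (fun i => (m i : ℝ))) t = u x t)
    (hdiff : ∀ x t, 0 < t →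
      DifferentiableAt ℝ
        (fun p : EuclideanSpace ℝ (Fin d) × ℝ => Real.log (u p.1 p.2)) (x, t))
    (α C₁ C₂ : ℝ) (hα : 0 < α) (hC₁ : 0 ≤ C₁) (hC₂ : 0 ≤ C₂)
    (hLiYau : ∀ x t, 0 < t →
      ‖gradient (fun y => Real.log (u y t)) x‖ ^ 2
          - α * deriv (fun s => Real.log (u x s)) t ≤ C₁ + C₂ / t) :
    ∀ x y : EuclideanSpace ℝ (Fin d), ∀ t₁ t₂ : ℝ, 0 < t₁ → t₁ < t₂ →
      u x t₁ ≤ u y t₂ * (t₂ / t₁) ^ (C₂ / α)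
          * Real.exp (α * d / (4 * (t₂ - t₁)) + (C₁ / α) * (t₂ - t₁)) := by
  intro x y t₁ t₂ ht₁ ht12
  have ht₂ : 0 < t₂ := ht₁.trans ht12
  set τ := t₂ - t₁ with hτdef
  have hτ : 0 < τ := sub_pos.mpr ht12
  set m : Fin d → ℤ := fun i => ⌊x i - y i⌋ with hm
  set y' : EuclideanSpace ℝ (Fin d) :=
    y + (EuclideanSpace.equiv (Fin d) ℝ).symm (fun i => (m i : ℝ)) with hy'
  set w : EuclideanSpace ℝ (Fin d) := y' - x with hwdef
  -- norm bound
  have hw2 : ‖w‖ ^ 2 ≤ d := by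
    have hwc : ∀ i, w i = -(Int.fract (x i - y i)) := by
      intro i
      have : w i = y i + (⌊x i - y i⌋ : ℝ) - x i := by
        rw [hwdef, hy', PiLp.sub_apply, PiLp.add_apply]; rfl
      rw [this, Int.fract]; push_cast; ring
    have hnorm : ‖w‖ ^ 2 = ∑ i, (w i) ^ 2 := by
      rw [EuclideanSpace.norm_eq, Real.sq_sqrt (by positivity)]
      simp [sq_abs]
    rw [hnorm]
    calc ∑ i, (w i) ^ 2 ≤ ∑ _i : Fin d, (1 : ℝ) := by
          apply Finset.sum_le_sum
          intro i _
          rw [hwc i, neg_sq]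
          have h1 := Int.fract_nonneg (x i - y i)
          have h2 := Int.fract_lt_one (x i - y i)
          nlinarith
      _ = d := by simp
  set f : EuclideanSpace ℝ (Fin d) × ℝ → ℝ := fun p => Real.log (u p.1 p.2) with hf
  set A : ℝ := -(α * ‖w‖ ^ 2 / (4 * τ) + C₁ * τ / α) with hA
  set G : ℝ → ℝ := fun s =>
    f (x + s • w, t₁ + s * τ) - (A * s - (C₂ / α) * Real.log (t₁ + s * τ)) with hG
  have key : ∀ s : ℝ, 0 < t₁ + s * τ → ∃ D, HasDerivAt G D s ∧ 0 ≤ D := by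
    intro s hts
    set x₀ := x + s • w with hx₀
    set t₀ := t₁ + s * τ with ht₀def
    have hF := (hdiff x₀ t₀ hts).hasFDerivAt
    set Df := fderiv ℝ f (x₀, t₀) with hDfdef
    have hpath : HasDerivAt
        (fun r : ℝ => ((x + r • w, t₁ + r * τ) : EuclideanSpace ℝ (Fin d) × ℝ)) (w, τ) s := by
      apply HasDerivAt.prodMk
      · simpa using ((hasDerivAt_id s).smul_const w).const_add x
      · simpa using ((hasDerivAt_id s).mul_const τ).const_add t₁
    have hg : HasDerivAt (fun r : ℝ => f (x + r • w, t₁ + r * τ)) (Df (w, τ)) s :=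
      by have := hF.comp_hasDerivAt s hpath; exact this
    have hx0 : HasFDerivAt (fun z => Real.log (u z t₀))
        (Df.comp (ContinuousLinearMap.inl ℝ (EuclideanSpace ℝ (Fin d)) ℝ)) x₀ :=
      by have := hF.comp x₀ (hasFDerivAt_prodMk_left (𝕜 := ℝ) x₀ t₀); exact this
    have hgradw : ⟪gradient (fun z => Real.log (u z t₀)) x₀, w⟫_ℝ = Df (w, 0) := by
      unfold gradient
      rw [hx0.fderiv, InnerProductSpace.toDual_symm_apply]
      simp
    have ht0 : HasDerivAt (fun r => Real.log (u x₀ r)) (Df (0, 1)) t₀ := by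
      have hp : HasDerivAt (fun r : ℝ => ((x₀, r) : EuclideanSpace ℝ (Fin d) × ℝ))
          ((0 : EuclideanSpace ℝ (Fin d)), (1 : ℝ)) t₀ :=
        (hasDerivAt_const t₀ x₀).prodMk (hasDerivAt_id t₀)
      exact hF.comp_hasDerivAt t₀ hp
    have hderiv_t : deriv (fun r => Real.log (u x₀ r)) t₀ = Df (0, 1) := ht0.deriv
    have hsplit : Df (w, τ) = Df (w, 0) + τ * Df (0, 1) := by
      have hwt : (w, τ) = (w, (0 : ℝ)) + τ • ((0 : EuclideanSpace ℝ (Fin d)), (1 : ℝ)) := by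
        simp [Prod.ext_iff]
      rw [hwt, map_add, map_smul]
      simp
    have hH : HasDerivAt (fun r : ℝ => A * r - (C₂ / α) * Real.log (t₁ + r * τ))
        (A - (C₂ / α) * (τ / t₀)) s := by
      have h1 : HasDerivAt (fun r : ℝ => A * r) A s := by
        simpa using (hasDerivAt_id s).const_mul A
      have h2 : HasDerivAt (fun r : ℝ => t₁ + r * τ) τ s := by
        simpa using ((hasDerivAt_id s).mul_const τ).const_add t₁
      have h3 : HasDerivAt (fun r : ℝ => Real.log (t₁ + r * τ)) (t₀⁻¹ * τ) s :=
        by have := (Real.hasDerivAt_log hts.ne').comp s h2; exact this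
      have h4 := h3.const_mul (C₂ / α)
      exact (h1.sub h4).congr_deriv (by ring)
    refine ⟨Df (w, τ) - (A - (C₂ / α) * (τ / t₀)), hg.sub hH, ?_⟩
    have hLY := hLiYau x₀ t₀ hts
    rw [hderiv_t] at hLY
    set a := ‖gradient (fun z => Real.log (u z t₀)) x₀‖ with ha
    have hCS : -(a * ‖w‖) ≤ ⟪gradient (fun z => Real.log (u z t₀)) x₀, w⟫_ℝ := by
      have h := abs_real_inner_le_norm (gradient (fun z => Real.log (u z t₀)) x₀) w
      have h2 := neg_abs_le (⟪gradient (fun z => Real.log (u z t₀)) x₀, w⟫_ℝ)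
      linarith
    have hAM : a * ‖w‖ ≤ (τ / α) * a ^ 2 + ‖w‖ ^ 2 / (4 * (τ / α)) :=
      aux_amgm a ‖w‖ (τ / α) (by positivity)
    have hrw : ‖w‖ ^ 2 / (4 * (τ / α)) = α * ‖w‖ ^ 2 / (4 * τ) := by
      field_simp
    have h5 : (τ / α) * (a ^ 2 - C₁ - C₂ / t₀) ≤ τ * Df (0, 1) := by
      have hle : a ^ 2 - C₁ - C₂ / t₀ ≤ α * Df (0, 1) := by linarith
      calc (τ / α) * (a ^ 2 - C₁ - C₂ / t₀) ≤ (τ / α) * (α * Df (0, 1)) :=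
            mul_le_mul_of_nonneg_left hle (by positivity)
        _ = τ * Df (0, 1) := by field_simp
    have h5' : τ / α * a ^ 2 - C₁ * τ / α - C₂ / α * (τ / t₀) ≤ τ * Df (0, 1) := by
      have expand : (τ / α) * (a ^ 2 - C₁ - C₂ / t₀)
          = τ / α * a ^ 2 - C₁ * τ / α - C₂ / α * (τ / t₀) := by ring
      linarith [h5]
    rw [hrw] at hAM
    rw [hsplit, ← hgradw, hA]
    linarith [hCS, hAM, h5']
  have hts_pos : ∀ s ∈ Set.Icc (0 : ℝ) 1, 0 < t₁ + s * τ := by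
    intro s hs
    nlinarith [hs.1, hτ, ht₁]
  have hdiffG : ∀ s ∈ Set.Icc (0 : ℝ) 1, DifferentiableAt ℝ G s := fun s hs =>
    ((key s (hts_pos s hs)).choose_spec.1).differentiableAt
  have hmono : MonotoneOn G (Set.Icc 0 1) := by
    apply monotoneOn_of_deriv_nonneg (convex_Icc 0 1)
    · exact fun s hs => (hdiffG s hs).continuousAt.continuousWithinAt
    · rw [interior_Icc]
      exact fun s hs => (hdiffG s (Set.mem_Icc_of_Ioo hs)).differentiableWithinAt
    · rw [interior_Icc]
      intro s hs
      obtain ⟨D, hD, hD0⟩ := key s (hts_pos s (Set.mem_Icc_of_Ioo hs))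
      rw [hD.deriv]; exact hD0
  have hG01 : G 0 ≤ G 1 :=
    hmono (Set.left_mem_Icc.mpr zero_le_one) (Set.right_mem_Icc.mpr zero_le_one) zero_le_one
  have hxw : x + (1 : ℝ) • w = y' := by
    rw [one_smul, hwdef]; abel
  have ht1τ : t₁ + 1 * τ = t₂ := by rw [hτdef]; ring
  have hGe0 : G 0 = Real.log (u x t₁) + (C₂ / α) * Real.log t₁ := by
    simp [hG, hf]
  have hGe1 : G 1 = Real.log (u y' t₂) - A + (C₂ / α) * Real.log t₂ := by
    rw [hG]
    simp only [hxw, ht1τ, hf]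
    ring
  have hy'per : u y' t₂ = u y t₂ := hper m y t₂ ht₂
  have hAbound : -A ≤ α * ↑d / (4 * τ) + (C₁ / α) * τ := by
    rw [hA]
    have h1 : α * ‖w‖ ^ 2 / (4 * τ) ≤ α * ↑d / (4 * τ) := by
      gcongr
    have h2 : C₁ * τ / α = (C₁ / α) * τ := by ring
    linarith
  have hlog : Real.log (u x t₁) ≤ Real.log (u y t₂)
      + (C₂ / α) * (Real.log t₂ - Real.log t₁) + (α * ↑d / (4 * τ) + (C₁ / α) * τ) := by
    rw [hGe0, hGe1, hy'per] at hG01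
    linarith [hG01, hAbound]
  have hrpow : (t₂ / t₁) ^ (C₂ / α) = Real.exp ((C₂ / α) * Real.log (t₂ / t₁)) := by
    rw [Real.rpow_def_of_pos (by positivity)]
    ring_nf
  calc u x t₁ = Real.exp (Real.log (u x t₁)) := (Real.exp_log (hu x t₁ ht₁)).symm
    _ ≤ Real.exp (Real.log (u y t₂) + (C₂ / α) * Real.log (t₂ / t₁)
          + (α * ↑d / (4 * τ) + (C₁ / α) * τ)) := by
        apply Real.exp_le_exp.mpr
        rw [Real.log_div ht₂.ne' ht₁.ne']
        linarith
    _ = u y t₂ * (t₂ / t₁) ^ (C₂ / α) * Real.exp (α * ↑d / (4 * τ) + (C₁ / α) * τ) := by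
        rw [Real.exp_add, Real.exp_add, Real.exp_log (hu y t₂ ht₂), hrpow]
end
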